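/- Let u₀ ∈ V be a fixed point of A (Au₀ = u₀). Then u₀ is twice differentiable on [ε,Λ] and satisfies the second-order differential equation x²·u₀''(x) + 2x·u₀'(x) + (λ/4)·[x·u₀(x)/(x + u₀(x)²)] = 0 for all x ∈ [ε,Λ]. -/

import Mathlib

open Real Set MeasureTheory intervalIntegral Topology

/-- The function `w(x) = (4ε/λ)·√(ε/(Λx))`. -/
noncomputable def wfun (lam ε Λ : ℝ) (x : ℝ) : ℝ :=
  (4 * ε / lam) * Real.sqrt (ε / (Λ * x))

/-- The nonlinear integral operator `A`. -/
noncomputable def opA (lam ε Λ : ℝ) (u : ℝ → ℝ) (x : ℝ) : ℝ :=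
  (lam / 2) * ∫ y in ε..Λ, (1 / (y + x + |y - x|)) * (y * u y / (y + (u y) ^ 2))

/-- Membership in the set `V`: continuous on `[ε,Λ]` and `w(x) ≤ u(x) ≤ (λ/4)√Λ` there. -/
def memV (lam ε Λ : ℝ) (u : ℝ → ℝ) : Prop :=
  ContinuousOn u (Set.Icc ε Λ) ∧
    ∀ x ∈ Set.Icc ε Λ, wfun lam ε Λ x ≤ u x ∧ u x ≤ (lam / 4) * Real.sqrt Λ

theorem stmt_12 (ε Λ lam : ℝ) (hε : 0 < ε) (hεΛ : ε < Λ) (hlam : 2 < lam)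
    (hratio : ε / Λ ≤ min (1 / 16)
      (((Real.sqrt (lam ^ 2 + 128 * (lam - 2)) - lam) / 64) ^ 2))
    (u₀ : ℝ → ℝ) (hu₀ : memV lam ε Λ u₀)
    (hfix : ∀ x ∈ Set.Icc ε Λ, u₀ x = opA lam ε Λ u₀ x) :
    ∃ u₀' u₀'' : ℝ → ℝ,
      (∀ x ∈ Set.Icc ε Λ, HasDerivWithinAt u₀ (u₀' x) (Set.Icc ε Λ) x) ∧
      (∀ x ∈ Set.Icc ε Λ, HasDerivWithinAt u₀' (u₀'' x) (Set.Icc ε Λ) x) ∧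
      ∀ x ∈ Set.Icc ε Λ,
        x ^ 2 * u₀'' x + 2 * x * u₀' x
          + (lam / 4) * (x * u₀ x / (x + (u₀ x) ^ 2)) = 0 := by
  obtain ⟨hc, -⟩ := hu₀
  set g : ℝ → ℝ := fun y => y * u₀ y / (y + (u₀ y) ^ 2) with hgdef
  have hgc : ContinuousOn g (Set.Icc ε Λ) := by
    apply ContinuousOn.div (continuousOn_id.mul hc) (continuousOn_id.add (hc.pow 2))
    intro y hy
    have hy0 : 0 < y := hε.trans_le hy.1
    exact (by positivity : (0:ℝ) < y + u₀ y ^ 2).ne'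
  have hg2c : ContinuousOn (fun y => g y / y) (Set.Icc ε Λ) :=
    hgc.div continuousOn_id (fun y hy => (hε.trans_le hy.1).ne')
  -- interval integrability within [ε, Λ]
  have hInt : ∀ {f : ℝ → ℝ}, ContinuousOn f (Set.Icc ε Λ) → ∀ {a b : ℝ},
      a ∈ Set.Icc ε Λ → b ∈ Set.Icc ε Λ → IntervalIntegrable f volume a b := by
    intro f hf a b ha hb
    exact (hf.mono (Set.uIcc_subset_Icc ha hb)).intervalIntegrable
  set F : ℝ → ℝ := fun x => ∫ y in ε..x, g y with hFdef
  set H : ℝ → ℝ := fun x => ∫ y in x..Λ, g y / y with hHdef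
  have hεmem : ε ∈ Set.Icc ε Λ := ⟨le_rfl, hεΛ.le⟩
  have hΛmem : Λ ∈ Set.Icc ε Λ := ⟨hεΛ.le, le_rfl⟩
  -- representation
  have hrep : ∀ x ∈ Set.Icc ε Λ, u₀ x = (lam / 4) * ((1 / x) * F x + H x) := by
    intro x hx
    have hx0 : 0 < x := hε.trans_le hx.1
    have hkc : ContinuousOn (fun y => (1 / (y + x + |y - x|)) * g y) (Set.Icc ε Λ) := by
      apply ContinuousOn.mul _ hgc
      apply ContinuousOn.div continuousOn_const
      · exact (continuousOn_id.add continuousOn_const).add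
          ((continuousOn_id.sub continuousOn_const).abs)
      · intro y hy
        have hy0 : 0 < y := hε.trans_le hy.1
        have habs : (0:ℝ) ≤ |y - x| := abs_nonneg _
        nlinarith
    have hk1 : IntervalIntegrable (fun y => (1 / (y + x + |y - x|)) * g y) volume ε x :=
      hInt hkc hεmem hx
    have hk2 : IntervalIntegrable (fun y => (1 / (y + x + |y - x|)) * g y) volume x Λ :=
      hInt hkc hx hΛmem
    have h1 : (∫ y in ε..x, (1 / (y + x + |y - x|)) * g y) = (1 / (2 * x)) * F x := by
      rw [hFdef, ← intervalIntegral.integral_const_mul]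
      apply intervalIntegral.integral_congr
      intro y hy
      rw [Set.uIcc_of_le hx.1] at hy
      have h1 : |y - x| = x - y := by
        rw [abs_of_nonpos (by linarith [hy.2] : y - x ≤ 0)]; ring
      have h2 : y + x + (x - y) = 2 * x := by ring
      simp only
      rw [h1, h2]
    have h2 : (∫ y in x..Λ, (1 / (y + x + |y - x|)) * g y) = (1 / 2) * H x := by
      rw [hHdef, ← intervalIntegral.integral_const_mul]
      apply intervalIntegral.integral_congr
      intro y hy
      rw [Set.uIcc_of_le hx.2] at hy
      have hy0 : 0 < y := hx0.trans_le hy.1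
      have h1 : |y - x| = y - x := abs_of_nonneg (by linarith [hy.1])
      have h2 : y + x + (y - x) = 2 * y := by ring
      simp only
      rw [h1, h2]
      field_simp
    have hsplit : (∫ y in ε..Λ, (1 / (y + x + |y - x|)) * g y)
        = (∫ y in ε..x, (1 / (y + x + |y - x|)) * g y)
          + ∫ y in x..Λ, (1 / (y + x + |y - x|)) * g y :=
      (intervalIntegral.integral_add_adjacent_intervals hk1 hk2).symm
    have hA : opA lam ε Λ u₀ x = (lam / 2) * ∫ y in ε..Λ, (1 / (y + x + |y - x|)) * g y := rfl
    rw [hfix x hx, hA, hsplit, h1, h2]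
    field_simp
    ring
  -- FTC derivatives
  have hmeasg : ∀ x : ℝ, StronglyMeasurableAtFilter g (𝓝[Set.Icc ε Λ] x) volume :=
    fun x => hgc.stronglyMeasurableAtFilter_nhdsWithin measurableSet_Icc x
  have hmeasg2 : ∀ x : ℝ, StronglyMeasurableAtFilter (fun y => g y / y) (𝓝[Set.Icc ε Λ] x) volume :=
    fun x => hg2c.stronglyMeasurableAtFilter_nhdsWithin measurableSet_Icc x
  have hFderiv : ∀ x ∈ Set.Icc ε Λ, HasDerivWithinAt F (g x) (Set.Icc ε Λ) x := by
    intro x hx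
    haveI : Fact (x ∈ Set.Icc ε Λ) := ⟨hx⟩
    exact intervalIntegral.integral_hasDerivWithinAt_right (hInt hgc hεmem hx)
      (hmeasg x) (hgc x hx)
  have hHderiv : ∀ x ∈ Set.Icc ε Λ, HasDerivWithinAt H (-(g x / x)) (Set.Icc ε Λ) x := by
    intro x hx
    haveI : Fact (x ∈ Set.Icc ε Λ) := ⟨hx⟩
    exact intervalIntegral.integral_hasDerivWithinAt_left (hInt hg2c hx hΛmem)
      (hmeasg2 x) (hg2c x hx)
  refine ⟨fun x => -(lam / 4) * F x / x ^ 2,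
    fun x => (lam / 4) * (2 * F x / x ^ 3 - g x / x ^ 2), ?_, ?_, ?_⟩
  · intro x hx
    have hx0 : 0 < x := hε.trans_le hx.1
    have hinv : HasDerivWithinAt (fun x : ℝ => 1 / x) (-(1 / x ^ 2)) (Set.Icc ε Λ) x := by
      simpa [one_div] using (hasDerivAt_inv hx0.ne').hasDerivWithinAt
    have hφ : HasDerivWithinAt (fun x => (lam / 4) * ((1 / x) * F x + H x))
        ((lam / 4) * (((-(1 / x ^ 2)) * F x + (1 / x) * g x) + -(g x / x)))
        (Set.Icc ε Λ) x :=
      (((hinv.mul (hFderiv x hx)).add (hHderiv x hx)).const_mul (lam / 4))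
    have heq : (lam / 4) * (((-(1 / x ^ 2)) * F x + (1 / x) * g x) + -(g x / x))
        = -(lam / 4) * F x / x ^ 2 := by
      field_simp
      ring
    rw [heq] at hφ
    exact hφ.congr (fun y hy => hrep y hy) (hrep x hx)
  · intro x hx
    have hx0 : 0 < x := hε.trans_le hx.1
    have hx2 : HasDerivWithinAt (fun x : ℝ => x ^ 2) (2 * x) (Set.Icc ε Λ) x := by
      simpa using (hasDerivAt_pow 2 x).hasDerivWithinAt
    have hnum : HasDerivWithinAt (fun x => -(lam / 4) * F x) (-(lam / 4) * g x)
        (Set.Icc ε Λ) x := (hFderiv x hx).const_mul _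
    have hdiv : HasDerivWithinAt (fun x => -(lam / 4) * F x / x ^ 2)
        ((-(lam / 4) * g x * x ^ 2 - -(lam / 4) * F x * (2 * x)) / (x ^ 2) ^ 2)
        (Set.Icc ε Λ) x := hnum.div hx2 (by positivity)
    have heq : (-(lam / 4) * g x * x ^ 2 - -(lam / 4) * F x * (2 * x)) / (x ^ 2) ^ 2
        = (lam / 4) * (2 * F x / x ^ 3 - g x / x ^ 2) := by
      field_simp
      ring
    rw [heq] at hdiv
    exact hdiv
  · intro x hx
    have hx0 : 0 < x := hε.trans_le hx.1
    have hgx : x * u₀ x / (x + u₀ x ^ 2) = g x := rfl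
    rw [hgx]
    field_simp
    ring
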